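/- If a contraction R ε-stabilizes a density operator ρ (i.e., Re Tr(Rρ) ≥ 1 − ε), then for any contraction S, |Re Tr(SRρ) − Re Tr(Sρ)| ≤ O(√ε). -/

import Mathlib

open Matrix ComplexOrder

/-- A matrix is a contraction if `RᴴR ⪯ I`, i.e. its operator norm is at most `1`. -/
def IsContraction {n : ℕ} (R : Matrix (Fin n) (Fin n) ℂ) : Prop :=
  ((1 : Matrix (Fin n) (Fin n) ℂ) - Rᴴ * R).PosSemidef

/-- Cauchy–Schwarz for the trace (Frobenius) inner product. -/
theorem trace_CS_aux {n : ℕ} (M N : Matrix (Fin n) (Fin n) ℂ) :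
    ‖(Mᴴ * N).trace‖ ≤ Real.sqrt ((Mᴴ * M).trace.re) * Real.sqrt ((Nᴴ * N).trace.re) := by
  let f : Matrix (Fin n) (Fin n) ℂ → EuclideanSpace ℂ (Fin n × Fin n) :=
    fun P => (WithLp.equiv 2 _).symm (fun p => P p.1 p.2)
  have key : ∀ P Q : Matrix (Fin n) (Fin n) ℂ,
      (inner ℂ (f P) (f Q) : ℂ) = (Pᴴ * Q).trace := by
    intro P Q
    simp only [f, PiLp.inner_apply, RCLike.inner_apply, WithLp.equiv_symm_apply, PiLp.toLp_apply,
      Matrix.trace, Matrix.diag, Matrix.mul_apply, Matrix.conjTranspose_apply,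
      Fintype.sum_prod_type]
    rw [Finset.sum_comm]
    simp [mul_comm]
  have h2 : ‖f M‖ = Real.sqrt ((Mᴴ * M).trace.re) := by
    rw [norm_eq_sqrt_re_inner (𝕜 := ℂ), key M M]; rfl
  have h3 : ‖f N‖ = Real.sqrt ((Nᴴ * N).trace.re) := by
    rw [norm_eq_sqrt_re_inner (𝕜 := ℂ), key N N]; rfl
  have h1 := norm_inner_le_norm (𝕜 := ℂ) (f M) (f N)
  rwa [key M N, h2, h3] at h1

/-- The trace of a positive semidefinite matrix is nonnegative. -/
theorem trace_psd_nonneg_aux {n : ℕ} {A : Matrix (Fin n) (Fin n) ℂ} (hA : A.PosSemidef) :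
    (0 : ℂ) ≤ A.trace := by
  rw [Matrix.trace]
  apply Finset.sum_nonneg
  intro i _
  exact hA.diag_nonneg

open scoped MatrixOrder in
theorem psd_sqrt_aux {n : ℕ} {ρ : Matrix (Fin n) (Fin n) ℂ} (hρ : ρ.PosSemidef) :
    ∃ q : Matrix (Fin n) (Fin n) ℂ, q * q = ρ ∧ qᴴ = q :=
  ⟨CFC.sqrt ρ, CFC.sqrt_mul_sqrt_self ρ hρ.nonneg, (CFC.sqrt_nonneg ρ).isSelfAdjoint.star_eq⟩

/-- For PSD `A` and PSD `ρ`, `Tr(Aρ) ≥ 0`. -/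
theorem trace_mul_psd_nonneg_aux {n : ℕ} {A ρ : Matrix (Fin n) (Fin n) ℂ}
    (hA : A.PosSemidef) (hρ : ρ.PosSemidef) : (0 : ℂ) ≤ (A * ρ).trace := by
  obtain ⟨q, hq, hqh⟩ : ∃ q : Matrix (Fin n) (Fin n) ℂ, q * q = ρ ∧ qᴴ = q :=
    psd_sqrt_aux hρ
  have h1 : (A * ρ).trace = (qᴴ * A * q).trace := by
    rw [hqh, ← hq, ← Matrix.mul_assoc, Matrix.trace_mul_comm, ← Matrix.mul_assoc]
  rw [h1]
  exact trace_psd_nonneg_aux (hA.conjTranspose_mul_mul_same q)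

/-- Algebraic identity used in the proof. -/
theorem sub_conj_aux {n : ℕ} (S B : Matrix (Fin n) (Fin n) ℂ) :
    Bᴴ * B - (S * B)ᴴ * (S * B) = Bᴴ * (1 - Sᴴ * S) * B := by
  rw [Matrix.conjTranspose_mul]; noncomm_ring

/-- If a contraction `R` ε-stabilizes a density operator `ρ`, then for any contraction
`S`, `|Re Tr(SRρ) − Re Tr(Sρ)| ≤ O(√ε)`. -/
theorem stabilizer_insertion :
    ∃ C : ℝ, 0 < C ∧
      ∀ (n : ℕ) (R S ρ : Matrix (Fin n) (Fin n) ℂ) (ε : ℝ),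
        IsContraction R → IsContraction S →
        ρ.PosSemidef → ρ.trace = 1 → 0 ≤ ε →
        1 - ε ≤ ((R * ρ).trace).re →
        |((S * R * ρ).trace).re - ((S * ρ).trace).re| ≤ C * Real.sqrt ε := by
  refine ⟨2, by norm_num, ?_⟩
  intro n R S ρ ε hR hS hρ hρ1 hε hstab
  obtain ⟨q, hq, hqh⟩ : ∃ q : Matrix (Fin n) (Fin n) ℂ, q * q = ρ ∧ qᴴ = q :=
    psd_sqrt_aux hρ
  -- key trace identity: Tr(qᴴ · (S(R-1)q)) = Tr(SRρ) - Tr(Sρ)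
  have hkey : (qᴴ * (S * ((R - 1) * q))).trace = (S * R * ρ).trace - (S * ρ).trace := by
    rw [hqh, Matrix.trace_mul_comm]
    have h : S * ((R - 1) * q) * q = S * R * ρ - S * ρ := by rw [← hq]; noncomm_ring
    rw [h, Matrix.trace_sub]
  have hMM : (qᴴ * q).trace = 1 := by rw [hqh, hq, hρ1]
  -- Tr(Nᴴ N) ≤ Tr(Bᴴ B) with B = (R-1)q, N = S·B
  have hNB : (((S * ((R - 1) * q))ᴴ * (S * ((R - 1) * q))).trace).re
      ≤ ((((R - 1) * q)ᴴ * ((R - 1) * q)).trace).re := by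
    have hpsd : (0 : ℂ) ≤ (((R - 1) * q)ᴴ * (1 - Sᴴ * S) * ((R - 1) * q)).trace :=
      trace_psd_nonneg_aux (hS.conjTranspose_mul_mul_same ((R - 1) * q))
    rw [← sub_conj_aux S ((R - 1) * q), Matrix.trace_sub] at hpsd
    have := (Complex.le_def.mp hpsd).1
    simpa using this
  -- Tr(Bᴴ B) = Tr((R-1)ᴴ(R-1)ρ)
  have hBB : (((R - 1) * q)ᴴ * ((R - 1) * q)).trace = (((R - 1)ᴴ * (R - 1)) * ρ).trace := by
    rw [Matrix.conjTranspose_mul, hqh]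
    have h1 : q * (R - 1)ᴴ * ((R - 1) * q) = q * ((R - 1)ᴴ * (R - 1) * q) := by noncomm_ring
    rw [h1, Matrix.trace_mul_comm]
    have h2 : (R - 1)ᴴ * (R - 1) * q * q = (R - 1)ᴴ * (R - 1) * ρ := by rw [← hq]; noncomm_ring
    rw [h2]
  -- Tr(RᴴRρ) ≤ 1
  have hRR : (((Rᴴ * R) * ρ).trace).re ≤ 1 := by
    have h0 : (0 : ℂ) ≤ (((1 : Matrix (Fin n) (Fin n) ℂ) - Rᴴ * R) * ρ).trace :=
      trace_mul_psd_nonneg_aux hR hρ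
    have hexp : ((1 : Matrix (Fin n) (Fin n) ℂ) - Rᴴ * R) * ρ = ρ - (Rᴴ * R) * ρ := by
      noncomm_ring
    rw [hexp, Matrix.trace_sub, hρ1] at h0
    have := (Complex.le_def.mp h0).1
    simpa using this
  -- re Tr(Rᴴ ρ) = re Tr(R ρ)
  have hRh : ((Rᴴ * ρ).trace).re = ((R * ρ).trace).re := by
    have h : Rᴴ * ρ = (ρᴴ * R)ᴴ := by
      rw [Matrix.conjTranspose_mul, Matrix.conjTranspose_conjTranspose]
    rw [h, Matrix.trace_conjTranspose, hρ.isHermitian.eq, Matrix.trace_mul_comm]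
    simp [Complex.star_def]
  -- re Tr((R-1)ᴴ(R-1)ρ) ≤ 2ε
  have hB2 : ((((R - 1)ᴴ * (R - 1)) * ρ).trace).re ≤ 2 * ε := by
    have hexp : ((R - 1)ᴴ * (R - 1)) * ρ = (Rᴴ * R) * ρ - R * ρ - Rᴴ * ρ + ρ := by
      simp only [Matrix.conjTranspose_sub, Matrix.conjTranspose_one]
      noncomm_ring
    rw [hexp, Matrix.trace_add, Matrix.trace_sub, Matrix.trace_sub, hρ1]
    simp only [Complex.add_re, Complex.sub_re, Complex.one_re]
    rw [hRh]
    linarith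
  -- Cauchy–Schwarz
  have hCS := trace_CS_aux q (S * ((R - 1) * q))
  rw [hkey, hMM] at hCS
  have hsq : Real.sqrt ((1 : ℂ).re) = 1 := by simp
  rw [hsq, one_mul] at hCS
  have hN2 : Real.sqrt ((((S * ((R - 1) * q))ᴴ * (S * ((R - 1) * q))).trace).re)
      ≤ Real.sqrt (2 * ε) := by
    apply Real.sqrt_le_sqrt
    calc (((S * ((R - 1) * q))ᴴ * (S * ((R - 1) * q))).trace).re
        ≤ ((((R - 1) * q)ᴴ * ((R - 1) * q)).trace).re := hNB
      _ = ((((R - 1)ᴴ * (R - 1)) * ρ).trace).re := by rw [hBB]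
      _ ≤ 2 * ε := hB2
  have habs : |((S * R * ρ).trace).re - ((S * ρ).trace).re|
      ≤ ‖(S * R * ρ).trace - (S * ρ).trace‖ := by
    rw [← Complex.sub_re]
    exact Complex.abs_re_le_norm _
  have h2e : Real.sqrt (2 * ε) ≤ 2 * Real.sqrt ε := by
    rw [Real.sqrt_mul (by norm_num : (0:ℝ) ≤ 2)]
    have h4 : Real.sqrt 2 ≤ 2 := by
      nlinarith [Real.sq_sqrt (show (0:ℝ) ≤ 2 by norm_num), Real.sqrt_nonneg 2]
    exact mul_le_mul_of_nonneg_right h4 (Real.sqrt_nonneg _)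
  calc |((S * R * ρ).trace).re - ((S * ρ).trace).re|
      ≤ ‖(S * R * ρ).trace - (S * ρ).trace‖ := habs
    _ ≤ Real.sqrt ((((S * ((R - 1) * q))ᴴ * (S * ((R - 1) * q))).trace).re) := hCS
    _ ≤ Real.sqrt (2 * ε) := hN2
    _ ≤ 2 * Real.sqrt ε := h2e
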